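/- Let A and B be virtually torsion-free groups and let C be a finite group with injective homomorphisms C → A and C → B. Then the amalgamated free product G = A *_C B is virtually torsion-free. -/

import Mathlib

/-- A group is virtually torsion-free if it has a torsion-free subgroup of finite index. -/
def VirtuallyTorsionFree (G : Type) [Group G] : Prop :=
  ∃ H : Subgroup G, H.FiniteIndex ∧ ∀ x : G, x ∈ H → IsOfFinOrder x → x = 1

open Monoid Monoid.PushoutI Monoid.CoprodI

namespace Stmt16Aux


variable {ι : Type} {H : Type} {G : ι → Type} [Group H] [∀ i, Group (G i)]
  (φ : ∀ i, H →* G i)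

def p (l : List (Σ i, G i)) : PushoutI φ :=
  (l.map (fun a => PushoutI.of (φ := φ) a.1 a.2)).prod

def Good (l : List (Σ i, G i)) : Prop :=
  (∀ a ∈ l, a.2 ∉ (φ a.1).range) ∧ l.Chain' (fun a b => a.1 ≠ b.1)

theorem p_nil : p φ ([] : List (Σ i, G i)) = 1 := rfl

theorem p_cons (a : (Σ i, G i)) (l : List (Σ i, G i)) :
    p φ (a :: l) = PushoutI.of a.1 a.2 * p φ l := by simp [p]

theorem p_append (l₁ l₂ : List (Σ i, G i)) : p φ (l₁ ++ l₂) = p φ l₁ * p φ l₂ := by simp [p]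

theorem p_singleton (a : (Σ i, G i)) : p φ [a] = PushoutI.of a.1 a.2 := by simp [p]

theorem ofCoprodI_prod (w : Word G) : ofCoprodI (w.prod) = p φ w.toList := by
  rw [Word.prod, p, map_list_prod, List.map_map]
  simp [Function.comp_def, ofCoprodI_of]

theorem p_not_base (hφ : ∀ i, Function.Injective (φ i)) {l : List (Σ i, G i)}
    (hl : Good φ l) (hne : l ≠ []) : p φ l ∉ (PushoutI.base φ).range := by
  intro hmem
  let w : Word G := ⟨l, fun a ha h1 => hl.1 a ha ⟨1, by simp [h1]⟩, hl.2⟩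
  have hred : Reduced φ w := fun a ha => hl.1 a ha
  have hempty := hred.eq_empty_of_mem_range hφ (by
    rw [ofCoprodI_prod]; exact hmem)
  have : l = [] := congrArg Word.toList hempty
  exact hne this

theorem pow_rep {l : List (Σ i, G i)} (hl : Good φ l) {a b : Σ i, G i}
    (hhead : l.head? = some a) (hlast : l.getLast? = some b) (hba : b.1 ≠ a.1) :
    ∀ k : ℕ, ∃ L : List (Σ i, G i), Good φ L ∧ L.head? = some a ∧ L.getLast? = some b ∧
      p φ l ^ (k + 1) = p φ L := by
  have p_append : ∀ l₁ l₂ : List (Σ i, G i), p φ (l₁ ++ l₂) = p φ l₁ * p φ l₂ := by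
    intro l₁ l₂; simp [p]
  intro k
  induction k with
  | zero => exact ⟨l, hl, hhead, hlast, by rw [pow_one]⟩
  | succ k ihk =>
    obtain ⟨L, hL, hLh, hLl, hpL⟩ := ihk
    have hLne : L ≠ [] := by rintro rfl; simp at hLh
    have hlne : l ≠ [] := by rintro rfl; simp at hhead
    refine ⟨l ++ L, ⟨?_, ?_⟩, ?_, ?_, ?_⟩
    · intro x hx
      rcases List.mem_append.1 hx with h | h
      exacts [hl.1 _ h, hL.1 _ h]
    · rw [List.Chain', List.isChain_append]
      refine ⟨hl.2, hL.2, fun x hx y hy => ?_⟩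
      rw [hlast] at hx
      rw [hLh] at hy
      cases hx; cases hy
      exact hba
    · rcases l with _ | ⟨c, t⟩
      · simp at hhead
      · simpa using hhead
    · rw [List.getLast?_append, hLl]
      rfl
    · rw [pow_succ', hpL, p_append]


theorem isOfFinOrder_conj {x u : PushoutI φ} (hx : IsOfFinOrder x) :
    IsOfFinOrder (u⁻¹ * x * u) := by
  have := (MulAut.conj u⁻¹).toMonoidHom.isOfFinOrder hx
  simpa [MulAut.conj_apply, mul_assoc] using this

theorem key (hφ : ∀ i, Function.Injective (φ i)) [Nonempty ι] :
    ∀ (n : ℕ) (h : H) (l : List (Σ i, G i)), Good φ l → l.length ≤ n →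
    IsOfFinOrder (PushoutI.base φ h * p φ l) →
    ∃ (i : ι) (g : PushoutI φ) (a : G i),
      PushoutI.base φ h * p φ l = g * PushoutI.of i a * g⁻¹ := by
  intro n
  induction n with
  | zero =>
    intro h l _ hlen _
    have : l = [] := List.length_eq_zero_iff.mp (Nat.le_zero.mp hlen)
    subst this
    exact ⟨Classical.arbitrary ι, 1, φ _ h, by simp [p_nil, of_apply_eq_base]⟩
  | succ n ih =>
    intro h l hl hlen hfin
    rcases l with _ | ⟨a, m⟩
    · exact ⟨Classical.arbitrary ι, 1, φ _ h, by simp [p_nil, of_apply_eq_base]⟩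
    rcases m.eq_nil_or_concat with rfl | ⟨m', b, rfl⟩
    · refine ⟨a.1, 1, φ a.1 h * a.2, ?_⟩
      rw [p_singleton]
      simp [map_mul, of_apply_eq_base]
    · -- l = a :: (m' ++ [b])
      simp only [List.concat_eq_append] at hl hlen hfin ⊢
      set x := PushoutI.base φ h * p φ (a :: (m' ++ [b])) with hxdef
      have hx_eq : x = PushoutI.base φ h * PushoutI.of a.1 a.2 * p φ m' * PushoutI.of b.1 b.2 := by
        rw [hxdef, p_cons, p_append, p_singleton, ← mul_assoc, ← mul_assoc]
      have hmlen : m'.length + 2 ≤ n + 1 := by simpa using hlen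
      have h2 : List.Chain' (fun u v : (Σ i, G i) => u.1 ≠ v.1) (m' ++ [b]) := hl.2.tail
      rw [List.Chain', List.isChain_append] at h2
      have hgood_m' : Good φ m' := ⟨fun y hy => hl.1 y (by simp [hy]), h2.1⟩
      have hbmem : b.2 ∉ (φ b.1).range := hl.1 b (by simp)
      have hbound : ∀ y ∈ m'.getLast?, y.1 ≠ b.1 := fun y hy => h2.2.2 y hy b (by simp)
      by_cases hab : b.1 = a.1
      · obtain ⟨ib, gb⟩ := b
        change ib = a.1 at hab
        subst hab
        set u := PushoutI.base φ h * PushoutI.of a.1 a.2 with hudef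
        set c := gb * φ a.1 h * a.2 with hcdef
        have key1 : PushoutI.of a.1 gb * PushoutI.base φ h * PushoutI.of a.1 a.2
            = PushoutI.of a.1 c := by
          rw [← of_apply_eq_base φ a.1 h, ← map_mul, ← map_mul]
        have hyx : u⁻¹ * x * u = p φ m' * PushoutI.of a.1 c := by
          rw [hx_eq, ← key1, hudef]
          group
        by_cases hc : c ∈ (φ a.1).range
        · obtain ⟨h', hh'⟩ := hc
          have hy2 : u⁻¹ * x * u = p φ m' * PushoutI.base φ h' := by
            rw [hyx, ← hh', of_apply_eq_base]
          have hz : PushoutI.base φ h' * p φ m' = (u * p φ m')⁻¹ * x * (u * p φ m') := by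
            have : (u * p φ m')⁻¹ * x * (u * p φ m')
                = (p φ m')⁻¹ * (u⁻¹ * x * u) * p φ m' := by group
            rw [this, hy2]
            group
          have hfz : IsOfFinOrder (PushoutI.base φ h' * p φ m') := by
            rw [hz]; exact isOfFinOrder_conj φ hfin
          obtain ⟨i, g, aa, hga⟩ := ih h' m' hgood_m' (by omega) hfz
          refine ⟨i, (u * p φ m') * g, aa, ?_⟩
          have hx2 : x = (u * p φ m') * (PushoutI.base φ h' * p φ m') * (u * p φ m')⁻¹ := by
            rw [hz]; group
          rw [hx2, hga]
          group
        · have hyp : u⁻¹ * x * u = PushoutI.base φ 1 * p φ (m' ++ [⟨a.1, c⟩]) := by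
            rw [hyx, p_append, p_singleton, map_one, one_mul]
          have hgood : Good φ (m' ++ [⟨a.1, c⟩]) := by
            refine ⟨?_, ?_⟩
            · intro y hy
              rcases List.mem_append.1 hy with h' | h'
              · exact hgood_m'.1 y h'
              · simp at h'
                subst h'
                exact hc
            · rw [List.Chain', List.isChain_append]
              refine ⟨hgood_m'.2, List.isChain_singleton _, fun y hy z hz => ?_⟩
              simp at hz
              subst hz
              exact hbound y hy
          have hfy : IsOfFinOrder (PushoutI.base φ 1 * p φ (m' ++ [⟨a.1, c⟩])) := by
            rw [← hyp]; exact isOfFinOrder_conj φ hfin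
          obtain ⟨i, g, aa, hga⟩ := ih 1 _ hgood (by simp; omega) hfy
          refine ⟨i, u * g, aa, ?_⟩
          have hx2 : x = u * (PushoutI.base φ 1 * p φ (m' ++ [⟨a.1, c⟩])) * u⁻¹ := by
            rw [← hyp]; group
          rw [hx2, hga]
          group
      · -- infinite order case
        exfalso
        set l'' := (a :: m') ++ [⟨b.1, b.2 * φ b.1 h⟩] with hl''def
        have hx' : p φ (a :: (m' ++ [b])) * PushoutI.base φ h = p φ l'' := by
          rw [show a :: (m' ++ [b]) = (a :: m') ++ [b] by simp,
            p_append, p_singleton, hl''def, p_append, p_singleton, mul_assoc,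
            ← of_apply_eq_base φ b.1 h, ← map_mul]
        have hgood'' : Good φ l'' := by
          constructor
          · intro y hy
            rcases List.mem_append.1 hy with h' | h'
            · refine hl.1 y ?_
              simp only [List.mem_cons] at h'
              simp only [List.mem_cons, List.mem_append, List.mem_singleton]
              tauto
            · simp at h'
              subst h'
              intro hr
              exact hbmem ((Subgroup.mul_mem_cancel_right _ (MonoidHom.mem_range.mpr ⟨h, rfl⟩)).mp hr)
          · rw [List.Chain', List.isChain_append]
            refine ⟨?_, List.isChain_singleton _, ?_⟩
            · have := hl.2
              rw [show a :: (m' ++ [b]) = (a :: m') ++ [b] by simp, List.Chain', List.isChain_append] at this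
              exact this.1
            · intro y hy z hz
              simp at hz
              subst hz
              have := hl.2
              rw [show a :: (m' ++ [b]) = (a :: m') ++ [b] by simp, List.Chain', List.isChain_append] at this
              exact this.2.2 y hy b (by simp)
        have hhead'' : l''.head? = some a := by simp [hl''def]
        have hlast'' : l''.getLast? = some ⟨b.1, b.2 * φ b.1 h⟩ := by
          rw [hl''def, List.getLast?_append] <;> simp
        have hfin'' : IsOfFinOrder (p φ l'') := by
          rw [← hx']
          have : p φ (a :: (m' ++ [b])) * PushoutI.base φ h
              = (PushoutI.base φ h)⁻¹ * x * PushoutI.base φ h := by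
            rw [hxdef]; group
          rw [this]
          exact isOfFinOrder_conj φ hfin
        obtain ⟨k, hk0, hk1⟩ := isOfFinOrder_iff_pow_eq_one.mp hfin''
        obtain ⟨k', rfl⟩ : ∃ k', k = k' + 1 := ⟨k - 1, by omega⟩
        obtain ⟨L, hLgood, hLh, hLl, hpL⟩ := pow_rep φ hgood'' hhead'' hlast'' hab k'
        have hL1 : p φ L = 1 := by rw [← hpL, hk1]
        have hLne : L ≠ [] := by rintro rfl; simp at hLh
        exact p_not_base φ hφ hLgood hLne (hL1 ▸ ⟨1, by simp⟩)

theorem exists_rep (hφ : ∀ i, Function.Injective (φ i)) (x : PushoutI φ) :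
    ∃ (h : H) (l : List (Σ i, G i)), Good φ l ∧ x = PushoutI.base φ h * p φ l := by
  classical
  obtain ⟨d⟩ := Monoid.PushoutI.NormalWord.transversal_nonempty φ hφ
  set w := NormalWord.equiv (d := d) x with hw
  have hx : w.prod = x := NormalWord.equiv.symm_apply_apply x
  refine ⟨w.head, w.toList, ⟨?_, w.chain_ne⟩, ?_⟩
  · rintro ⟨i, g⟩ ha hgr
    have h1 : g ≠ 1 := w.ne_one ⟨i, g⟩ ha
    have hset : g ∈ d.set i := w.normalized i g ha
    have hinj := (d.compl i).injective
      (a₁ := (⟨⟨g, hgr⟩, ⟨1, d.one_mem i⟩⟩ : ((φ i).range : Set (G i)) × d.set i))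
      (a₂ := (⟨⟨1, one_mem _⟩, ⟨g, hset⟩⟩ : ((φ i).range : Set (G i)) × d.set i))
      (by simp)
    have : (1 : G i) = g := congrArg (fun q => (q.2 : G i)) hinj
    exact h1 this.symm
  · rw [← hx, NormalWord.prod, ofCoprodI_prod φ w.toWord]


theorem conj_of_isOfFinOrder (hφ : ∀ i, Function.Injective (φ i)) [Nonempty ι]
    {x : PushoutI φ} (hx : IsOfFinOrder x) :
    ∃ (i : ι) (g : PushoutI φ) (a : G i), x = g * PushoutI.of i a * g⁻¹ := by
  obtain ⟨h, l, hl, rfl⟩ := exists_rep φ hφ x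
  exact key φ hφ l.length h l hl le_rfl hx


section Perm

variable {C X : Type} [Group C]

theorem free_decomp (ρ : C →* Equiv.Perm X) (hfree : ∀ c x, ρ c x = x → c = 1) :
    ∃ (T : Type) (e : X ≃ C × T), ∀ c x, e (ρ c x) = (c * (e x).1, (e x).2) := by
  classical
  let s : Setoid X := ⟨fun x y => ∃ c, ρ c x = y,
    ⟨fun x => ⟨1, by simp⟩,
     fun ⟨c, hc⟩ => ⟨c⁻¹, by rw [← hc, map_inv]; exact Equiv.symm_apply_apply _ _⟩,
     fun ⟨c, hc⟩ ⟨d, hd⟩ => ⟨d * c, by rw [map_mul, Equiv.Perm.mul_apply, hc, hd]⟩⟩⟩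
  let T := Quotient s
  let f : C × T → X := fun ct => ρ ct.1 (Quotient.out ct.2)
  have hbij : Function.Bijective f := by
    constructor
    · rintro ⟨c, t⟩ ⟨c', t'⟩ hcc
      simp only [f] at hcc
      have htt : t = t' := by
        have : s.r t.out t'.out := ⟨c'⁻¹ * c, by
          rw [map_mul, Equiv.Perm.mul_apply, hcc, map_inv, ← Equiv.Perm.mul_apply, inv_mul_cancel, Equiv.Perm.one_apply]⟩
        calc t = ⟦t.out⟧ := (Quotient.out_eq t).symm
        _ = ⟦t'.out⟧ := Quotient.sound this
        _ = t' := Quotient.out_eq t'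
      subst htt
      have : ρ (c'⁻¹ * c) t.out = t.out := by
        rw [map_mul, Equiv.Perm.mul_apply, hcc, map_inv, ← Equiv.Perm.mul_apply, inv_mul_cancel, Equiv.Perm.one_apply]
      have := hfree _ _ this
      have : c' = c := inv_mul_eq_one.mp this
      simp [this]
    · intro x
      obtain ⟨c, hc⟩ : s.r (Quotient.out (⟦x⟧ : T)) x := Quotient.mk_out x
      exact ⟨⟨c, ⟦x⟧⟩, hc⟩
  let e := (Equiv.ofBijective f hbij).symm
  refine ⟨T, e, fun c x => ?_⟩
  have hx : f (e x) = x := (Equiv.ofBijective f hbij).apply_symm_apply x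
  have : f (c * (e x).1, (e x).2) = ρ c x := by
    simp only [f, map_mul, Equiv.Perm.mul_apply]
    rw [show ρ ((e x).1) (Quotient.out (e x).2) = f (e x) from rfl, hx]
  rw [← this]
  exact (Equiv.ofBijective f hbij).symm_apply_apply _

theorem exists_conj [Finite C] [Finite X] (ρ₁ ρ₂ : C →* Equiv.Perm X)
    (h₁ : ∀ c x, ρ₁ c x = x → c = 1) (h₂ : ∀ c x, ρ₂ c x = x → c = 1) :
    ∃ σ : Equiv.Perm X, ∀ c, σ * ρ₁ c * σ⁻¹ = ρ₂ c := by
  obtain ⟨T₁, e₁, he₁⟩ := free_decomp ρ₁ h₁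
  obtain ⟨T₂, e₂, he₂⟩ := free_decomp ρ₂ h₂
  haveI : Finite (C × T₁) := Finite.of_equiv X e₁
  haveI : Finite (C × T₂) := Finite.of_equiv X e₂
  haveI fT₁ : Finite T₁ := Finite.of_injective (fun t => ((1, t) : C × T₁))
    (fun a b h => by simpa using h)
  haveI fT₂ : Finite T₂ := Finite.of_injective (fun t => ((1, t) : C × T₂))
    (fun a b h => by simpa using h)
  have hcard : Nat.card T₁ = Nat.card T₂ := by
    have h1 : Nat.card C * Nat.card T₁ = Nat.card X := by
      rw [← Nat.card_prod]; exact (Nat.card_congr e₁).symm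
    have h2 : Nat.card C * Nat.card T₂ = Nat.card X := by
      rw [← Nat.card_prod]; exact (Nat.card_congr e₂).symm
    have hC : Nat.card C ≠ 0 := Nat.card_ne_zero.mpr ⟨⟨1⟩, inferInstance⟩
    have := h1.trans h2.symm
    exact Nat.eq_of_mul_eq_mul_left (Nat.pos_of_ne_zero hC) this
  obtain ⟨τ⟩ := Finite.card_eq.mp hcard
  refine ⟨(e₁.trans (Equiv.prodCongr (Equiv.refl C) τ)).trans e₂.symm, fun c => ?_⟩
  set σ := (e₁.trans (Equiv.prodCongr (Equiv.refl C) τ)).trans e₂.symm with hσ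
  have hσ_apply : ∀ z, σ z = e₂.symm ((e₁ z).1, τ (e₁ z).2) := fun z => rfl
  have key : ∀ y, σ (ρ₁ c y) = ρ₂ c (σ y) := by
    intro y
    apply e₂.injective
    rw [hσ_apply, Equiv.apply_symm_apply, he₁]
    have := he₂ c (σ y)
    rw [this, hσ_apply, Equiv.apply_symm_apply]
  ext x
  simp only [Equiv.Perm.coe_mul, Function.comp_apply]
  rw [key (σ⁻¹ x)]
  congr 1
  exact (Equiv.apply_symm_apply σ x)

end Perm


-- the two-group family
def Fam (X Y : Type) : Bool → Type
  | true => X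
  | false => Y

instance instGroupFam {X Y : Type} [Group X] [Group Y] : ∀ b, Group (Fam X Y b)
  | true => ‹Group X›
  | false => ‹Group Y›

def famHom {C X Y : Type} [Group C] [Group X] [Group Y] (f : C →* X) (g : C →* Y) :
    ∀ b, C →* Fam X Y b
  | true => f
  | false => g

def famMap {X Y K : Type} [Group X] [Group Y] [Group K] (f : X →* K) (g : Y →* K) :
    ∀ b, Fam X Y b →* K
  | true => f
  | false => g

/-- the hom `Perm α →* Perm (α × β)` acting on the first coordinate -/
def permFst {α β : Type} : Equiv.Perm α →* Equiv.Perm (α × β) where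
  toFun e := Equiv.prodCongr e (Equiv.refl β)
  map_one' := by ext ⟨x, y⟩ <;> simp
  map_mul' e f := by ext ⟨x, y⟩ <;> simp

def permSnd {α β : Type} : Equiv.Perm β →* Equiv.Perm (α × β) where
  toFun e := Equiv.prodCongr (Equiv.refl α) e
  map_one' := by ext ⟨x, y⟩ <;> simp
  map_mul' e f := by ext ⟨x, y⟩ <;> simp

theorem permFst_apply {α β : Type} (e : Equiv.Perm α) (x : α × β) :
    permFst e x = (e x.1, x.2) := rfl

theorem permSnd_apply {α β : Type} (e : Equiv.Perm β) (x : α × β) :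
    permSnd e x = (x.1, e x.2) := rfl

theorem quot_fix_mem {A : Type} [Group A] (N : Subgroup A) (g : A) (q : A)
    (hfix : (g • ((q : A) : A ⧸ N)) = ((q : A) : A ⧸ N)) : q⁻¹ * g⁻¹ * q ∈ N := by
  rw [MulAction.Quotient.smul_mk, smul_eq_mul] at hfix
  have h := QuotientGroup.eq.mp hfix
  simpa [mul_inv_rev, mul_assoc] using h


end Stmt16Aux

open Stmt16Aux in
theorem stmt16 {A B C G : Type} [Group A] [Group B] [Group C] [Group G]
    [Finite C]
    (φA : C →* A) (φB : C →* B)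
    (hφA : Function.Injective φA) (hφB : Function.Injective φB)
    (jA : A →* G) (jB : B →* G)
    (hcomm : jA.comp φA = jB.comp φB)
    (huniv : ∀ (H : Type) [Group H] (kA : A →* H) (kB : B →* H),
        kA.comp φA = kB.comp φB →
        ∃! f : G →* H, f.comp jA = kA ∧ f.comp jB = kB)
    (hA : VirtuallyTorsionFree A) (hB : VirtuallyTorsionFree B) :
    VirtuallyTorsionFree G := by
  classical
  obtain ⟨NA, hNAfi, hNAtf⟩ := hA
  obtain ⟨NB, hNBfi, hNBtf⟩ := hB
  haveI := hNAfi
  haveI := hNBfi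
  set φ' := famHom φA φB with hφ'def
  have hφ' : ∀ b, Function.Injective (φ' b) := by
    rintro (_ | _)
    exacts [hφB, hφA]
  -- the projection back to G
  let π : PushoutI φ' →* G := PushoutI.lift (famMap jA jB) (jA.comp φA)
    (by rintro (_ | _); exacts [hcomm.symm, rfl])
  -- the map from G to the pushout
  let oA : A →* PushoutI φ' := PushoutI.of (φ := φ') true
  let oB : B →* PushoutI φ' := PushoutI.of (φ := φ') false
  have hof : oA.comp φA = oB.comp φB := by
    exact (of_comp_eq_base (φ := φ') true).trans (of_comp_eq_base (φ := φ') false).symm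
  obtain ⟨θ, ⟨hθA, hθB⟩, -⟩ := huniv (PushoutI φ') oA oB hof
  obtain ⟨ψ, -, hψuniq⟩ := huniv G jA jB hcomm
  have hπθ : π.comp θ = MonoidHom.id G := by
    have h1 : π.comp θ = ψ := by
      apply hψuniq
      constructor
      · rw [MonoidHom.comp_assoc, hθA]
        ext a
        show π (PushoutI.of (φ := φ') true a) = jA a
        exact PushoutI.lift_of (φ := φ') _ _ _ (i := true) a
      · rw [MonoidHom.comp_assoc, hθB]
        ext b
        show π (PushoutI.of (φ := φ') false b) = jB b
        exact PushoutI.lift_of (φ := φ') _ _ _ (i := false) b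
    have h2 : MonoidHom.id G = ψ := by
      apply hψuniq
      exact ⟨MonoidHom.id_comp jA, MonoidHom.id_comp jB⟩
    rw [h1, h2]
  have hπθ_apply : ∀ x, π (θ x) = x := fun x => DFunLike.congr_fun hπθ x
  have hθinj : Function.Injective θ := fun x y hxy => by
    rw [← hπθ_apply x, ← hπθ_apply y, hxy]
  -- the permutation representation
  let kA0 : A →* Equiv.Perm (A ⧸ NA) := MulAction.toPermHom A (A ⧸ NA)
  let kB0 : B →* Equiv.Perm (B ⧸ NB) := MulAction.toPermHom B (B ⧸ NB)
  let KA : A →* Equiv.Perm ((A ⧸ NA) × (B ⧸ NB)) := permFst.comp kA0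
  let KB : B →* Equiv.Perm ((A ⧸ NA) × (B ⧸ NB)) := permSnd.comp kB0
  -- freeness of the two C-actions
  have hkA0 : ∀ (a : A), IsOfFinOrder a → kA0 a = 1 → a = 1 := by
    intro a ha hfix
    have h1 : (a • (((1 : A) : A ⧸ NA))) = (((1 : A) : A ⧸ NA)) := by
      show kA0 a ((1 : A) : A ⧸ NA) = ((1 : A) : A ⧸ NA)
      rw [hfix]; rfl
    have h3 := quot_fix_mem NA a 1 h1
    simp only [inv_one, one_mul, mul_one] at h3
    exact hNAtf a (by simpa using (NA.inv_mem_iff).mp (by simpa using h3)) ha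
  have hkB0 : ∀ (b : B), IsOfFinOrder b → kB0 b = 1 → b = 1 := by
    intro a ha hfix
    have h1 : (a • (((1 : B) : B ⧸ NB))) = (((1 : B) : B ⧸ NB)) := by
      show kB0 a ((1 : B) : B ⧸ NB) = ((1 : B) : B ⧸ NB)
      rw [hfix]; rfl
    have h3 := quot_fix_mem NB a 1 h1
    simp only [inv_one, one_mul, mul_one] at h3
    exact hNBtf a (by simpa using (NB.inv_mem_iff).mp (by simpa using h3)) ha
  have hfree1 : ∀ c x, (KA.comp φA) c x = x → c = 1 := by
    intro c x hcx
    obtain ⟨x1, x2⟩ := x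
    obtain ⟨q, rfl⟩ := QuotientGroup.mk_surjective x1
    have hq : (φA c • ((q : A) : A ⧸ NA)) = ((q : A) : A ⧸ NA) := congrArg Prod.fst hcx
    have h3 : q⁻¹ * (φA c)⁻¹ * q ∈ NA := quot_fix_mem NA (φA c) q hq
    have h4 : IsOfFinOrder (q⁻¹ * (φA c)⁻¹ * q) := by
      have hc : IsOfFinOrder ((φA c)⁻¹) := (φA.isOfFinOrder (isOfFinOrder_of_finite c)).inv
      have := (MulAut.conj q⁻¹).toMonoidHom.isOfFinOrder hc
      simpa [MulAut.conj_apply] using this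
    have h5 := hNAtf _ h3 h4
    have h6 : (φA c)⁻¹ = 1 := by
      have : q * (q⁻¹ * (φA c)⁻¹ * q) * q⁻¹ = (φA c)⁻¹ := by group
      rw [h5] at this
      simpa using this.symm
    apply hφA
    rw [map_one]
    exact inv_eq_one.mp h6
  have hfree2 : ∀ c x, (KB.comp φB) c x = x → c = 1 := by
    intro c x hcx
    obtain ⟨x1, x2⟩ := x
    obtain ⟨q, rfl⟩ := QuotientGroup.mk_surjective x2
    have hq : (φB c • ((q : B) : B ⧸ NB)) = ((q : B) : B ⧸ NB) := congrArg Prod.snd hcx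
    have h3 : q⁻¹ * (φB c)⁻¹ * q ∈ NB := quot_fix_mem NB (φB c) q hq
    have h4 : IsOfFinOrder (q⁻¹ * (φB c)⁻¹ * q) := by
      have hc : IsOfFinOrder ((φB c)⁻¹) := (φB.isOfFinOrder (isOfFinOrder_of_finite c)).inv
      have := (MulAut.conj q⁻¹).toMonoidHom.isOfFinOrder hc
      simpa [MulAut.conj_apply] using this
    have h5 := hNBtf _ h3 h4
    have h6 : (φB c)⁻¹ = 1 := by
      have : q * (q⁻¹ * (φB c)⁻¹ * q) * q⁻¹ = (φB c)⁻¹ := by group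
      rw [h5] at this
      simpa using this.symm
    apply hφB
    rw [map_one]
    exact inv_eq_one.mp h6
  obtain ⟨σ, hσ⟩ := exists_conj (KA.comp φA) (KB.comp φB) hfree1 hfree2
  let KA' : A →* Equiv.Perm ((A ⧸ NA) × (B ⧸ NB)) :=
    ((MulAut.conj σ).toMonoidHom).comp KA
  have hcomm' : KA'.comp φA = KB.comp φB := by
    refine MonoidHom.ext fun c => ?_
    exact hσ c
  let F : PushoutI φ' →* Equiv.Perm ((A ⧸ NA) × (B ⧸ NB)) :=
    PushoutI.lift (famMap KA' KB) (KA'.comp φA)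
      (by rintro (_ | _); exacts [hcomm'.symm, rfl])
  let Φ : G →* Equiv.Perm ((A ⧸ NA) × (B ⧸ NB)) := F.comp θ
  refine ⟨Φ.ker, inferInstance, ?_⟩
  intro x hx hord
  have hθx : IsOfFinOrder (θ x) := θ.isOfFinOrder hord
  obtain ⟨i, g, aa, hconj⟩ := conj_of_isOfFinOrder φ' hφ' hθx
  have hFx : F (θ x) = 1 := hx
  have hFa : F (PushoutI.of i aa) = 1 := by
    rw [hconj, map_mul, map_mul, map_inv] at hFx
    have h7 : F (PushoutI.of i aa)
        = (F g)⁻¹ * (F g * F (PushoutI.of i aa) * (F g)⁻¹) * F g := by group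
    rw [hFx] at h7
    simpa using h7
  have haord : IsOfFinOrder aa := by
    have h1 : IsOfFinOrder (PushoutI.of (φ := φ') i aa) := by
      have h2 : IsOfFinOrder (g⁻¹ * θ x * g) := by
        have := (MulAut.conj g⁻¹).toMonoidHom.isOfFinOrder hθx
        simpa [MulAut.conj_apply, mul_assoc] using this
      rw [hconj] at h2
      have h3 : g⁻¹ * (g * PushoutI.of (φ := φ') i aa * g⁻¹) * g
          = PushoutI.of (φ := φ') i aa := by group
      rwa [h3] at h2
    exact (Function.Injective.isOfFinOrder_iff (PushoutI.of_injective hφ' i)).mp h1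
  have ha1 : aa = 1 := by
    cases i
    · -- i = false : aa : B
      have hKB : KB aa = 1 := by
        have : F (PushoutI.of false aa) = KB aa := PushoutI.lift_of _ _ _ _
        rw [← this, hFa]
      have hkB : kB0 aa = 1 := by
        ext q
        have := congrArg (fun (e : Equiv.Perm ((A ⧸ NA) × (B ⧸ NB))) =>
          e (((1 : A) : A ⧸ NA), q)) hKB
        exact congrArg Prod.snd this
      exact hkB0 aa haord hkB
    · -- i = true : aa : A
      have hKA' : KA' aa = 1 := by
        have : F (PushoutI.of true aa) = KA' aa := PushoutI.lift_of _ _ _ _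
        rw [← this, hFa]
      have hKA : KA aa = 1 := by
        have : σ * KA aa * σ⁻¹ = 1 := hKA'
        have h8 : KA aa = σ⁻¹ * (σ * KA aa * σ⁻¹) * σ := by group
        rw [this] at h8
        simpa using h8
      have hkA : kA0 aa = 1 := by
        ext q
        have := congrArg (fun (e : Equiv.Perm ((A ⧸ NA) × (B ⧸ NB))) =>
          e (q, ((1 : B) : B ⧸ NB))) hKA
        exact congrArg Prod.fst this
      exact hkA0 aa haord hkA
  apply hθinj
  rw [hconj, ha1, map_one, map_one, mul_one, mul_inv_cancel]
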